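/- Define ζ(t)² = 1 + 2M²k²/p(t,k,η)² where p(t,k,η) = k² + (η−kt)². Then for all t ≥ 0, 1 ≤ ζ(t)² ≤ 1 + 2M², and the total variation of log ζ over [0,∞) is bounded: ∫₀^∞ |d/dt log ζ(t)| dt ≤ log(1 + 2M²). -/

import Mathlib

open Real MeasureTheory Set Filter Topology

namespace Stmt3Aux

noncomputable def pf (k : ℤ) (η t : ℝ) : ℝ := (k : ℝ) ^ 2 + (η - k * t) ^ 2
noncomputable def gf (M : ℝ) (k : ℤ) (η t : ℝ) : ℝ :=
  1 + 2 * M ^ 2 * (k : ℝ) ^ 2 / (pf k η t) ^ 2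
noncomputable def ff (M : ℝ) (k : ℤ) (η t : ℝ) : ℝ := Real.log (gf M k η t) / 2
noncomputable def Ff (M : ℝ) (k : ℤ) (η t : ℝ) : ℝ :=
  -(4 * M ^ 2 * (k : ℝ) ^ 2 * ((k : ℝ) ^ 2 * t - (k : ℝ) * η)) /
    ((pf k η t) ^ 3 * gf M k η t)

variable {M : ℝ} {k : ℤ} {η : ℝ}

lemma hk2 (hk : k ≠ 0) : (1 : ℝ) ≤ (k : ℝ) ^ 2 := by
  have h : (1 : ℤ) ≤ k ^ 2 := by rcases hk.lt_or_gt with h | h <;> nlinarith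
  exact_mod_cast h

lemma pf_pos (hk : k ≠ 0) (t : ℝ) : 0 < pf k η t := by
  have h1 : (1 : ℝ) ≤ (k : ℝ) ^ 2 := hk2 hk
  have := sq_nonneg (η - (k : ℝ) * t)
  unfold pf; linarith

lemma gf_ge_one (hk : k ≠ 0) (t : ℝ) : 1 ≤ gf M k η t := by
  have h : (0:ℝ) < pf k η t := pf_pos hk t
  have : 0 ≤ 2 * M ^ 2 * (k : ℝ) ^ 2 / (pf k η t) ^ 2 := by positivity
  unfold gf; linarith

lemma gf_pos (hk : k ≠ 0) (t : ℝ) : 0 < gf M k η t :=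
  lt_of_lt_of_le one_pos (gf_ge_one hk t)

lemma gf_le (hk : k ≠ 0) (t : ℝ) : gf M k η t ≤ 1 + 2 * M ^ 2 := by
  have hp : (0:ℝ) < pf k η t := pf_pos hk t
  have h1 : (1 : ℝ) ≤ (k : ℝ) ^ 2 := hk2 hk
  have hpk : (k : ℝ) ^ 2 ≤ pf k η t := by
    have := sq_nonneg (η - (k : ℝ) * t); unfold pf; linarith
  have hsq : (k : ℝ) ^ 2 ≤ (pf k η t) ^ 2 := by nlinarith
  have : 2 * M ^ 2 * (k : ℝ) ^ 2 / (pf k η t) ^ 2 ≤ 2 * M ^ 2 := by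
    rw [div_le_iff₀ (by positivity)]
    nlinarith [sq_nonneg M]
  unfold gf; linarith

lemma ff_nonneg (hk : k ≠ 0) (t : ℝ) : 0 ≤ ff M k η t := by
  have h : (0:ℝ) ≤ Real.log (gf M k η t) := Real.log_nonneg (gf_ge_one hk t)
  unfold ff; linarith

lemma ff_le (hk : k ≠ 0) (t : ℝ) :
    ff M k η t ≤ Real.log (1 + 2 * M ^ 2) / 2 := by
  have h := Real.log_le_log (gf_pos (M := M) (η := η) hk t) (gf_le (M := M) (η := η) hk t)
  unfold ff; linarith

lemma hasDeriv (hk : k ≠ 0) (t : ℝ) : HasDerivAt (ff M k η) (Ff M k η t) t := by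
  have hp : (0:ℝ) < pf k η t := pf_pos hk t
  have hg : (0:ℝ) < gf M k η t := gf_pos hk t
  have hlin : HasDerivAt (fun s : ℝ => η - (k : ℝ) * s) (-(k : ℝ)) t := by
    simpa using ((hasDerivAt_id t).const_mul (k : ℝ)).const_sub η
  have hpd : HasDerivAt (pf k η) (2 * ((k : ℝ) ^ 2 * t - (k : ℝ) * η)) t := by
    have := (hlin.pow 2).const_add ((k : ℝ) ^ 2)
    refine this.congr_deriv ?_
    push_cast; ring
  have hud : HasDerivAt (fun s => (pf k η s) ^ 2)
      (2 * pf k η t ^ 1 * (2 * ((k : ℝ) ^ 2 * t - (k : ℝ) * η))) t := hpd.pow 2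
  have hu0 : (pf k η t) ^ 2 ≠ 0 := by positivity
  have hqd := (hasDerivAt_const t (2 * M ^ 2 * (k : ℝ) ^ 2)).div hud hu0
  have hgd : HasDerivAt (gf M k η)
      ((0 * (pf k η t) ^ 2 - 2 * M ^ 2 * (k : ℝ) ^ 2 *
        (2 * pf k η t ^ 1 * (2 * ((k : ℝ) ^ 2 * t - (k : ℝ) * η)))) /
        ((pf k η t) ^ 2) ^ 2) t := by
    unfold gf; simpa using hqd.const_add (1 : ℝ)
  have hfd := (hgd.log (ne_of_gt hg)).div_const 2
  have heq : (0 * (pf k η t) ^ 2 - 2 * M ^ 2 * (k : ℝ) ^ 2 *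
        (2 * pf k η t ^ 1 * (2 * ((k : ℝ) ^ 2 * t - (k : ℝ) * η)))) /
        ((pf k η t) ^ 2) ^ 2 / gf M k η t / 2 = Ff M k η t := by
    unfold Ff
    field_simp
    ring
  rw [heq] at hfd
  exact hfd

lemma Ff_cont (hk : k ≠ 0) : Continuous (Ff M k η) := by
  have hpc : Continuous (pf k η) := by unfold pf; continuity
  have hgc : Continuous (gf M k η) := by
    unfold gf
    exact continuous_const.add (continuous_const.div (by continuity)
      (fun t => by have : (0:ℝ) < pf k η t := pf_pos hk t; positivity))
  unfold Ff
  exact Continuous.div (by continuity) (by continuity)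
    (fun t => by
      have h1 : (0:ℝ) < pf k η t := pf_pos hk t
      have h2 : (0:ℝ) < gf M k η t := gf_pos hk t
      positivity)

lemma pf_tendsto (hk : k ≠ 0) : Tendsto (pf k η) atTop atTop := by
  apply tendsto_atTop_mono' atTop (_ : ∀ᶠ t in atTop, t ≤ pf k η t) tendsto_id
  filter_upwards [eventually_ge_atTop (2 * |η| + 2)] with t ht
  have h1 : (1 : ℝ) ≤ (k : ℝ) ^ 2 := hk2 hk
  have habs : |(k:ℝ)| * |t| - |η| ≤ |(k:ℝ) * t - η| := by
    calc |(k:ℝ)| * |t| - |η| = |(k:ℝ)*t| - |η| := by rw [abs_mul]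
    _ ≤ |(k:ℝ)*t - η| := abs_sub_abs_le_abs_sub _ _
  have ht0 : 0 ≤ t := by have := abs_nonneg η; linarith
  have hka : (1:ℝ) ≤ |(k:ℝ)| := by
    nlinarith [sq_abs (k:ℝ), abs_nonneg (k:ℝ)]
  have h2 : t - |η| ≤ |(k:ℝ) * t - η| := by
    have : t ≤ |(k:ℝ)| * |t| := by
      rw [abs_of_nonneg ht0]; nlinarith
    linarith
  have h3 : (η - (k:ℝ)*t)^2 = |(k:ℝ)*t - η|^2 := by
    rw [sq_abs]; ring
  have h4 : 0 ≤ t - |η| := by linarith [abs_nonneg η]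
  have h5 : (t - |η|)^2 ≤ |(k:ℝ)*t - η|^2 := by
    apply pow_le_pow_left₀ h4 h2
  unfold pf
  nlinarith [abs_nonneg η]

lemma ff_tendsto (hk : k ≠ 0) : Tendsto (ff M k η) atTop (𝓝 0) := by
  have hge1 : ∀ t, 1 ≤ pf k η t := fun t => by
    have h := hk2 (k := k) hk
    have := sq_nonneg (η - (k:ℝ)*t)
    unfold pf; linarith
  have h1 : Tendsto (fun t => (pf k η t) ^ 2) atTop atTop :=
    tendsto_atTop_mono (fun t => le_self_pow₀ (hge1 t) two_ne_zero) (pf_tendsto hk)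
  have h2 : Tendsto (gf M k η) atTop (𝓝 1) := by
    have := Tendsto.div_atTop (tendsto_const_nhds (x := 2 * M ^ 2 * (k : ℝ) ^ 2)) h1
    have h3 := this.const_add (1 : ℝ)
    unfold gf; simpa using h3
  have h4 : Tendsto (fun t => Real.log (gf M k η t)) atTop (𝓝 0) := by
    have := (Real.continuousAt_log (by norm_num : (1:ℝ) ≠ 0)).tendsto.comp h2
    rw [Real.log_one] at this; exact this
  have := h4.div_const 2
  unfold ff; simpa using this

lemma Ff_nonpos (hk : k ≠ 0) {t : ℝ} (h : (k:ℝ) * η ≤ (k:ℝ)^2 * t) :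
    Ff M k η t ≤ 0 := by
  have hp : (0:ℝ) < pf k η t := pf_pos hk t
  have hg : (0:ℝ) < gf M k η t := gf_pos hk t
  unfold Ff
  apply div_nonpos_of_nonpos_of_nonneg
  · have h1 : 0 ≤ 4 * M ^ 2 * (k:ℝ)^2 * ((k:ℝ)^2 * t - (k:ℝ) * η) :=
      mul_nonneg (by positivity) (by linarith)
    linarith
  · positivity

lemma Ff_nonneg' (hk : k ≠ 0) {t : ℝ} (h : (k:ℝ)^2 * t ≤ (k:ℝ) * η) :
    0 ≤ Ff M k η t := by
  have hp : (0:ℝ) < pf k η t := pf_pos hk t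
  have hg : (0:ℝ) < gf M k η t := gf_pos hk t
  unfold Ff
  apply div_nonneg _ (by positivity)
  have h1 : 4 * M ^ 2 * (k:ℝ)^2 * ((k:ℝ)^2 * t - (k:ℝ) * η) ≤ 0 :=
    mul_nonpos_of_nonneg_of_nonpos (by positivity) (by linarith)
  linarith

end Stmt3Aux

open Stmt3Aux in
/-- With `ζ(t)² = 1 + 2M²k²/p(t)²`, `p(t) = k² + (η−kt)²`: for all `t ≥ 0`,
`1 ≤ ζ(t)² ≤ 1 + 2M²`, and the total variation of `log ζ` on `(0,∞)` is at most
`log(1 + 2M²)`. -/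
theorem stmt_3 (M : ℝ) (hM : 0 < M) (k : ℤ) (hk : k ≠ 0) (η : ℝ) :
    (∀ t : ℝ, 0 ≤ t →
      1 ≤ (Real.sqrt (1 + 2 * M ^ 2 * (k : ℝ) ^ 2 /
              ((k : ℝ) ^ 2 + (η - k * t) ^ 2) ^ 2)) ^ 2 ∧
      (Real.sqrt (1 + 2 * M ^ 2 * (k : ℝ) ^ 2 /
              ((k : ℝ) ^ 2 + (η - k * t) ^ 2) ^ 2)) ^ 2 ≤ 1 + 2 * M ^ 2) ∧
    (∫ t in Set.Ioi (0 : ℝ),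
        |deriv (fun s : ℝ => Real.log (Real.sqrt (1 + 2 * M ^ 2 * (k : ℝ) ^ 2 /
            ((k : ℝ) ^ 2 + (η - k * s) ^ 2) ^ 2))) t|) ≤
      Real.log (1 + 2 * M ^ 2) := by
  have hk0 : (k:ℝ) ≠ 0 := Int.cast_ne_zero.mpr hk
  have hL0 : (0:ℝ) ≤ Real.log (1 + 2 * M ^ 2) :=
    Real.log_nonneg (by nlinarith [sq_nonneg M])
  constructor
  · intro t ht
    have h0 : (0:ℝ) ≤ gf M k η t := le_trans zero_le_one (gf_ge_one hk t)
    have e : (Real.sqrt (1 + 2 * M ^ 2 * (k : ℝ) ^ 2 /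
        ((k : ℝ) ^ 2 + (η - k * t) ^ 2) ^ 2)) ^ 2 = gf M k η t := Real.sq_sqrt h0
    rw [e]
    exact ⟨gf_ge_one hk t, gf_le hk t⟩
  · have hfun : (fun s : ℝ => Real.log (Real.sqrt (1 + 2 * M ^ 2 * (k : ℝ) ^ 2 /
        ((k : ℝ) ^ 2 + (η - k * s) ^ 2) ^ 2))) = ff M k η := by
      funext s
      have h0 : (0:ℝ) ≤ gf M k η s := le_trans zero_le_one (gf_ge_one hk s)
      exact Real.log_sqrt h0
    rw [hfun]
    have hder : deriv (ff M k η) = Ff M k η :=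
      funext fun t => (hasDeriv hk t).deriv
    rw [hder]
    rcases le_or_gt ((k:ℝ) * η) 0 with hcase | hcase
    · -- derivative nonpositive on all of (0, ∞)
      have hsgn : ∀ t ∈ Set.Ioi (0:ℝ), Ff M k η t ≤ 0 := fun t ht =>
        Ff_nonpos hk (by nlinarith [hk2 (k := k) hk, Set.mem_Ioi.mp ht])
      have habs : (∫ t in Set.Ioi (0:ℝ), |Ff M k η t|)
          = ∫ t in Set.Ioi (0:ℝ), -(Ff M k η t) :=
        MeasureTheory.setIntegral_congr_fun measurableSet_Ioi
          (fun t ht => abs_of_nonpos (hsgn t ht))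
      rw [habs]
      have hint : (∫ t in Set.Ioi (0:ℝ), -(Ff M k η t)) = -0 - -(ff M k η 0) :=
        MeasureTheory.integral_Ioi_of_hasDerivAt_of_nonneg'
          (fun x _ => (hasDeriv hk x).neg)
          (fun x hx => neg_nonneg.mpr (hsgn x hx)) ((ff_tendsto hk).neg)
      rw [hint]
      have h1 : ff M k η 0 ≤ Real.log (1 + 2 * M ^ 2) / 2 := ff_le hk 0
      linarith
    · -- derivative changes sign at c = η / k > 0
      set c : ℝ := η / (k:ℝ) with hcdef
      have hc : 0 < c := by
        have : c = ((k:ℝ) * η) / ((k:ℝ)^2) := by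
          rw [hcdef]; field_simp
        rw [this]; positivity
      have hkc : (k:ℝ)^2 * c = (k:ℝ) * η := by
        rw [hcdef]; field_simp
      have hsgn2 : ∀ t ∈ Set.Ioi c, Ff M k η t ≤ 0 := fun t ht => by
        have ht' : c < t := Set.mem_Ioi.mp ht
        refine Ff_nonpos hk ?_
        nlinarith [hk2 (k := k) hk]
      have hsgn1 : ∀ t ∈ Set.Ioc (0:ℝ) c, 0 ≤ Ff M k η t := fun t ht => by
        have ht' : t ≤ c := ht.2
        refine Ff_nonneg' hk ?_
        nlinarith [hk2 (k := k) hk]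
      have hIntTail : IntegrableOn (Ff M k η) (Set.Ioi c) :=
        MeasureTheory.integrableOn_Ioi_deriv_of_nonpos'
          (fun x _ => hasDeriv hk x) hsgn2 (ff_tendsto hk)
      have hsplit : (∫ t in Set.Ioi (0:ℝ), |Ff M k η t|)
          = (∫ t in Set.Ioc (0:ℝ) c, |Ff M k η t|)
            + ∫ t in Set.Ioi c, |Ff M k η t| := by
        rw [← Set.Ioc_union_Ioi_eq_Ioi hc.le]
        exact MeasureTheory.setIntegral_union (Set.Ioc_disjoint_Ioi le_rfl)
          measurableSet_Ioi ((Ff_cont hk).abs.integrableOn_Ioc) hIntTail.abs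
      rw [hsplit]
      have habs1 : (∫ t in Set.Ioc (0:ℝ) c, |Ff M k η t|)
          = ∫ t in Set.Ioc (0:ℝ) c, Ff M k η t :=
        MeasureTheory.setIntegral_congr_fun measurableSet_Ioc
          (fun t ht => abs_of_nonneg (hsgn1 t ht))
      have habs2 : (∫ t in Set.Ioi c, |Ff M k η t|)
          = ∫ t in Set.Ioi c, -(Ff M k η t) :=
        MeasureTheory.setIntegral_congr_fun measurableSet_Ioi
          (fun t ht => abs_of_nonpos (hsgn2 t ht))
      have hint1 : (∫ t in Set.Ioc (0:ℝ) c, Ff M k η t) = ff M k η c - ff M k η 0 := by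
        have h := intervalIntegral.integral_eq_sub_of_hasDerivAt
          (f := ff M k η) (f' := Ff M k η) (a := (0:ℝ)) (b := c)
          (fun x _ => hasDeriv hk x) ((Ff_cont hk).intervalIntegrable 0 c)
        rwa [intervalIntegral.integral_of_le hc.le] at h
      have hint2 : (∫ t in Set.Ioi c, -(Ff M k η t)) = -0 - -(ff M k η c) :=
        MeasureTheory.integral_Ioi_of_hasDerivAt_of_nonneg'
          (fun x _ => (hasDeriv hk x).neg)
          (fun x hx => neg_nonneg.mpr (hsgn2 x hx)) ((ff_tendsto hk).neg)
      rw [habs1, habs2, hint1, hint2]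
      have h1 : ff M k η c ≤ Real.log (1 + 2 * M ^ 2) / 2 := ff_le hk c
      have h2 : 0 ≤ ff M k η 0 := ff_nonneg hk 0
      linarith
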